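/- Let X be a finite connected edge-transitive simple graph with at least 3 vertices, and let N be a normal subgroup of Aut(X) of prime order such that the stabilizer in N of every vertex of X is trivial. Then the setwise stabilizer in N of every edge of X is trivial. -/

import Mathlib

namespace HAT

variable {V : Type*} {W : Type*}

/-- The automorphism group of a simple graph, as a subgroup of the permutation
group of the vertex set. -/
def autSubgroup (X : SimpleGraph V) : Subgroup (Equiv.Perm V) where
  carrier := {g | ∀ u v : V, X.Adj (g u) (g v) ↔ X.Adj u v}
  one_mem' := by intro u v; simp
  mul_mem' := by
    intro a b ha hb u v
    simp only [Equiv.Perm.mul_apply]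
    rw [ha, hb]
  inv_mem' := by
    intro a ha u v
    have h := (ha (a⁻¹ u) (a⁻¹ v)).symm
    simpa using h

/-- A subgroup of the permutation group of the vertex set acts transitively on vertices. -/
def VertexTransitive (G : Subgroup (Equiv.Perm V)) : Prop :=
  ∀ u v : V, ∃ g ∈ G, g u = v

/-- `G` acts transitively on the edges of `X`. -/
def EdgeTransitive (X : SimpleGraph V) (G : Subgroup (Equiv.Perm V)) : Prop :=
  ∀ ⦃u v x y : V⦄, X.Adj u v → X.Adj x y →
    ∃ g ∈ G, (g u = x ∧ g v = y) ∨ (g u = y ∧ g v = x)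

/-- `G` acts transitively on the arcs of `X`. -/
def ArcTransitive (X : SimpleGraph V) (G : Subgroup (Equiv.Perm V)) : Prop :=
  ∀ ⦃u v x y : V⦄, X.Adj u v → X.Adj x y → ∃ g ∈ G, g u = x ∧ g v = y

/-- `G` acts sharply transitively (regularly) on the arcs of `X`. -/
def ArcRegular (X : SimpleGraph V) (G : Subgroup (Equiv.Perm V)) : Prop :=
  ∀ ⦃u v x y : V⦄, X.Adj u v → X.Adj x y →
    ∃! g : G, (g : Equiv.Perm V) u = x ∧ (g : Equiv.Perm V) v = y

/-- `X` is `G`-half-arc-transitive. -/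
def HalfArcTransitive (X : SimpleGraph V) (G : Subgroup (Equiv.Perm V)) : Prop :=
  VertexTransitive G ∧ EdgeTransitive X G ∧ ¬ ArcTransitive X G

/-- `X` is regular of degree `k`. -/
def RegularOfDegree (X : SimpleGraph V) (k : ℕ) : Prop :=
  ∀ v : V, Nat.card (X.neighborSet v) = k

/-- A group of permutations acts semiregularly: all point stabilizers are trivial. -/
def Semiregular (N : Subgroup (Equiv.Perm V)) : Prop :=
  ∀ g ∈ N, (∃ v : V, g v = v) → g = 1

/-- A graph is a Cayley graph iff its automorphism group contains a subgroup
acting regularly (sharply transitively) on the vertices. -/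
def IsCayleyGraph (X : SimpleGraph V) : Prop :=
  ∃ H : Subgroup (Equiv.Perm V), H ≤ autSubgroup X ∧
    ∀ u v : V, ∃! h : H, (h : Equiv.Perm V) u = v

/-- The set of `N`-orbits on the vertex set. -/
abbrev Orbits (N : Subgroup (Equiv.Perm V)) : Type _ := Quotient (MulAction.orbitRel N V)

/-- The `N`-orbit of a vertex. -/
def orbitMk (N : Subgroup (Equiv.Perm V)) (v : V) : Orbits N :=
  Quotient.mk (MulAction.orbitRel N V) v

/-- The quotient graph `X_N`: vertices are the `N`-orbits, two orbits being adjacent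
iff some vertex of one is adjacent in `X` to some vertex of the other. -/
def quotientGraph (X : SimpleGraph V) (N : Subgroup (Equiv.Perm V)) :
    SimpleGraph (Orbits N) :=
  SimpleGraph.fromRel (fun B C => ∃ u v : V, orbitMk N u = B ∧ orbitMk N v = C ∧ X.Adj u v)

/-- `X` is an `N`-regular covering of the quotient graph `X_N`: `N` is semiregular and
the orbit projection maps each neighbourhood bijectively onto the neighbourhood of the
corresponding orbit. -/
def IsRegularCover (X : SimpleGraph V) (N : Subgroup (Equiv.Perm V)) : Prop :=
  Semiregular N ∧
    ∀ v : V, Set.BijOn (orbitMk N) (X.neighborSet v)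
      ((quotientGraph X N).neighborSet (orbitMk N v))

/-- The permutations of the orbit set induced by elements of `G` (this is the image of
the natural action of `G/N` when `N` is normal in `G`). -/
def inducedQuotSubgroup (G N : Subgroup (Equiv.Perm V)) :
    Subgroup (Equiv.Perm (Orbits N)) where
  carrier := {σ | ∃ g ∈ G, ∀ u : V, σ (orbitMk N u) = orbitMk N (g u)}
  one_mem' := ⟨1, G.one_mem, fun u => by simp⟩
  mul_mem' := by
    rintro σ τ ⟨g, hg, hgs⟩ ⟨h, hh, hhs⟩
    refine ⟨g * h, G.mul_mem hg hh, fun u => ?_⟩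
    simp [Equiv.Perm.mul_apply, hhs u, hgs (h u)]
  inv_mem' := by
    rintro σ ⟨g, hg, hgs⟩
    refine ⟨g⁻¹, G.inv_mem hg, fun u => ?_⟩
    have h1 := hgs (g⁻¹ u)
    have h2 : g (g⁻¹ u) = u := by simp
    rw [h2] at h1
    rw [← h1]
    simp

/-- A voltage assignment on the arcs of `Y` with values in the group `K`. -/
def IsVoltage (Y : SimpleGraph W) (K : Type*) [Group K] (ξ : W → W → K) : Prop :=
  ∀ u v : W, Y.Adj u v → ξ v u = (ξ u v)⁻¹

/-- The derived graph `Y ×_ξ K` of a voltage assignment `ξ`. -/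
def derivedGraph (Y : SimpleGraph W) {K : Type*} [Group K] (ξ : W → W → K) :
    SimpleGraph (W × K) :=
  SimpleGraph.fromRel (fun a b => Y.Adj a.1 b.1 ∧ b.2 = ξ a.1 b.1 * a.2)

/-- The graph `X(r; m, n)`: vertices `Z_m × Z_n`, with `(i,j)` adjacent to
`(i+1, j ± r^i)`. -/
def XG (m : ℕ) {n : ℕ} (r : (ZMod n)ˣ) : SimpleGraph (ZMod m × ZMod n) :=
  SimpleGraph.fromRel (fun a b =>
    b.1 = a.1 + 1 ∧
      (b.2 = a.2 + (r : ZMod n) ^ (a.1.val) ∨ b.2 = a.2 - (r : ZMod n) ^ (a.1.val)))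

/-- The Praeger–Xu graph `C(2;p,2)`: vertices `Z_p × Z_2 × Z_2`, with `(i,(x,y))`
adjacent to `(i+1,(y,z))`. -/
def Cp22 (p : ℕ) : SimpleGraph (ZMod p × ZMod 2 × ZMod 2) :=
  SimpleGraph.fromRel (fun a b => b.1 = a.1 + 1 ∧ b.2.1 = a.2.2)

/-- The lexicographic product `C_n[2K_1]`: vertices `Z_n × Z_2`, with `(i,x)`
adjacent to `(j,y)` iff `j = i ± 1`. -/
def cyc2K1 (n : ℕ) : SimpleGraph (ZMod n × ZMod 2) :=
  SimpleGraph.fromRel (fun a b => b.1 = a.1 + 1)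

/-- The wreath graph `W(6,2)`: vertices `Z_6 × Z_2`, with `(i,x)` adjacent to `(i+1,y)`. -/
def W62 : SimpleGraph (ZMod 6 × ZMod 2) :=
  SimpleGraph.fromRel (fun a b => b.1 = a.1 + 1)

/-- Base relation for the Rose Window graph `R_6(5,4)`: `inl i` is `S_i`, `inr i` is `Q_i`. -/
def roseR : (ZMod 6 ⊕ ZMod 6) → (ZMod 6 ⊕ ZMod 6) → Prop
  | Sum.inl i, Sum.inl j => j = i + 1
  | Sum.inl i, Sum.inr j => j = i ∨ i = j + 5
  | Sum.inr i, Sum.inr j => j = i + 4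
  | Sum.inr _, Sum.inl _ => False

/-- The Rose Window graph `R_6(5,4)`. -/
def roseWindow : SimpleGraph (ZMod 6 ⊕ ZMod 6) := SimpleGraph.fromRel roseR

/-- An elementary abelian `q`-group. -/
def IsElementaryAbelian (q : ℕ) (H : Type*) [Group H] : Prop :=
  (∀ a b : H, a * b = b * a) ∧ ∀ x : H, x ≠ 1 → orderOf x = q

/-- If `X` is a finite connected edge-transitive graph with at least 3
vertices and `N ⊴ Aut X` has prime order and trivial vertex stabilizers, then the
setwise stabilizer in `N` of every edge is trivial. -/
theorem stmt14 {V : Type*} [Fintype V] (X : SimpleGraph V) (hconn : X.Connected)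
    (hcard : 3 ≤ Nat.card V) (he : EdgeTransitive X (autSubgroup X))
    (N : Subgroup (Equiv.Perm V)) (hN : N ≤ autSubgroup X)
    (hnorm : ∀ g ∈ autSubgroup X, ∀ n ∈ N, g * n * g⁻¹ ∈ N)
    (hprime : (Nat.card N).Prime)
    (hstab : ∀ n ∈ N, ∀ v : V, n v = v → n = 1) :
    ∀ n ∈ N, ∀ u v : V, X.Adj u v → ({n u, n v} : Set V) = {u, v} → n = 1 := by
  intro n hn u v huv hset
  -- membership facts from hset
  have hmu : n u ∈ ({u, v} : Set V) := by rw [← hset]; left; rfl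
  have hmv : n v ∈ ({u, v} : Set V) := by rw [← hset]; right; rfl
  simp only [Set.mem_insert_iff, Set.mem_singleton_iff] at hmu hmv
  rcases hmu with hu | hu
  · exact hstab n hn u hu
  rcases hmv with hv | hv
  swap
  · exact hstab n hn v hv
  -- now n u = v, n v = u
  exfalso
  have hne : n ≠ 1 := by
    intro h1
    rw [h1] at hu
    simp at hu
    exact X.ne_of_adj huv hu
  have hsq : n * n = 1 := by
    apply hstab (n * n) (mul_mem hn hn) u
    simp [Equiv.Perm.mul_apply, hu, hv]
  -- order of n in N is 2
  haveI : Fact (Nat.Prime 2) := ⟨Nat.prime_two⟩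
  have horder : orderOf (⟨n, hn⟩ : N) = 2 := by
    apply orderOf_eq_prime
    · ext1
      simpa [pow_two] using hsq
    · intro h
      exact hne (congrArg Subtype.val h)
  have hdvd : (2 : ℕ) ∣ Nat.card N := horder ▸ orderOf_dvd_natCard _
  have hcard2 : Nat.card N = 2 := by
    rcases (Nat.Prime.eq_one_or_self_of_dvd hprime 2 hdvd) with h | h
    · omega
    · omega
  obtain ⟨b, -, hb⟩ := (Nat.card_eq_two_iff' (1 : N)).mp hcard2
  -- key: n swaps the endpoints of every edge
  have key : ∀ x y : V, X.Adj x y → n x = y := by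
    intro x y hxy
    obtain ⟨g, hg, hcase⟩ := he huv hxy
    have hm : g * n * g⁻¹ ∈ N := hnorm g hg n hn
    have hmne : (⟨g * n * g⁻¹, hm⟩ : N) ≠ 1 := by
      intro h
      apply hne
      have := congrArg Subtype.val h
      simp only [Subgroup.coe_one] at this
      have : n = g⁻¹ * 1 * g := by
        rw [← this]; group
      simpa using this
    have hnne : (⟨n, hn⟩ : N) ≠ 1 := by
      intro h; exact hne (congrArg Subtype.val h)
    have heq : (⟨g * n * g⁻¹, hm⟩ : N) = ⟨n, hn⟩ := (hb _ hmne).trans (hb _ hnne).symm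
    have heq' : g * n * g⁻¹ = n := congrArg Subtype.val heq
    rcases hcase with ⟨hgu, hgv⟩ | ⟨hgu, hgv⟩
    · calc n x = (g * n * g⁻¹) x := by rw [heq']
        _ = g (n u) := by rw [← hgu]; simp [Equiv.Perm.mul_apply]
        _ = y := by rw [hu, hgv]
    · calc n x = (g * n * g⁻¹) x := by rw [heq']
        _ = g (n v) := by rw [← hgv]; simp [Equiv.Perm.mul_apply]
        _ = y := by rw [hv, hgu]
  -- every vertex reachable from u lies in {u, v}
  have hreach : ∀ a b : V, X.Walk a b → (a = u ∨ a = v) → (b = u ∨ b = v) := by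
    intro a b p
    induction p with
    | nil => exact id
    | @cons a c b h q ih =>
      intro ha
      apply ih
      have hac := key a c h
      rcases ha with rfl | rfl
      · right; rw [← hac, hu]
      · left; rw [← hac, hv]
  -- get a third vertex
  have h3 : ∃ w : V, w ≠ u ∧ w ≠ v := by
    classical
    by_contra hcon
    push_neg at hcon
    have hsub : (Finset.univ : Finset V) ⊆ ({u, v} : Finset V) := by
      intro w _
      rcases eq_or_ne w u with rfl | hwu
      · simp
      · simp [hcon w hwu]
    have h2 : Fintype.card V ≤ ({u, v} : Finset V).card := Finset.card_le_card hsub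
    have h2' : ({u, v} : Finset V).card ≤ 2 :=
      le_trans (Finset.card_insert_le _ _) (by simp)
    have : Fintype.card V ≤ 2 := le_trans h2 h2'
    rw [Nat.card_eq_fintype_card] at hcard
    omega
  obtain ⟨w, hwu, hwv⟩ := h3
  obtain ⟨p⟩ := hconn.preconnected u w
  rcases hreach u w p (Or.inl rfl) with h | h
  · exact hwu h
  · exact hwv h

end HAT
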